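/- Let A be a local ring whose prime spectrum is a root system under inclusion and in which the sum of two primes is prime whenever proper. If p₁, …, p_n (n ≥ 2) are pairwise incomparable prime ideals of A, then for every i there exists j ≠ i such that p₁ + ⋯ + p_n = p_i + p_j. -/

import Mathlib

private lemma chain_finset_max {ι A : Type*} [CommRing A] (s : Finset ι) (hs : s.Nonempty)
    (f : ι → Ideal A) (hch : ∀ a ∈ s, ∀ b ∈ s, f a ≤ f b ∨ f b ≤ f a) :
    ∃ a ∈ s, ∀ b ∈ s, f b ≤ f a := by
  classical
  induction s using Finset.induction_on with
  | empty => exact absurd hs (by simp)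
  | @insert a t ha IH =>
    by_cases ht : t.Nonempty
    · obtain ⟨c, hc, hcmax⟩ := IH ht (fun x hx y hy =>
        hch x (Finset.mem_insert_of_mem hx) y (Finset.mem_insert_of_mem hy))
      rcases hch a (Finset.mem_insert_self a t) c (Finset.mem_insert_of_mem hc) with h | h
      · exact ⟨c, Finset.mem_insert_of_mem hc, fun b hb => by
          rcases Finset.mem_insert.mp hb with rfl | hb
          · exact h
          · exact hcmax b hb⟩
      · exact ⟨a, Finset.mem_insert_self a t, fun b hb => by
          rcases Finset.mem_insert.mp hb with rfl | hb
          · exact le_rfl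
          · exact (hcmax b hb).trans h⟩
    · rw [Finset.not_nonempty_iff_eq_empty] at ht
      subst ht
      exact ⟨a, Finset.mem_insert_self a ∅, fun b hb => by
        rcases Finset.mem_insert.mp hb with rfl | hb
        · exact le_rfl
        · simp at hb⟩

/-- In a local ring whose prime spectrum is a root system under inclusion
and where sums of primes are prime whenever proper, for pairwise incomparable primes
`p 1, ..., p n` (n ≥ 2) and every `i` there is `j ≠ i` with `∑ k, p k = p i + p j`. -/
theorem sum_primes_eq_sum_two {A : Type*} [CommRing A] [IsLocalRing A]
    (hroot : ∀ p q r : Ideal A, p.IsPrime → q.IsPrime → r.IsPrime →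
      p ≤ q → p ≤ r → q ≤ r ∨ r ≤ q)
    (hsum : ∀ p q : Ideal A, p.IsPrime → q.IsPrime → p + q ≠ ⊤ → (p + q).IsPrime)
    (n : ℕ) (hn : 2 ≤ n) (p : Fin n → Ideal A) (hp : ∀ i, (p i).IsPrime)
    (hinc : ∀ i j, i ≠ j → ¬ p i ≤ p j)
    (i : Fin n) :
    ∃ j, j ≠ i ∧ (∑ k, p k) = p i + p j := by
  classical
  have hne : ∀ q r : Ideal A, q.IsPrime → r.IsPrime → (q + r).IsPrime := by
    intro q r hq hr
    refine hsum q r hq hr ?_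
    intro htop
    have h1 : q + r ≤ IsLocalRing.maximalIdeal A :=
      sup_le (IsLocalRing.le_maximalIdeal hq.ne_top) (IsLocalRing.le_maximalIdeal hr.ne_top)
    rw [htop] at h1
    exact (IsLocalRing.maximalIdeal.isMaximal A).ne_top (top_le_iff.mp h1)
  set s : Finset (Fin n) := Finset.univ.erase i with hs
  have hsne : s.Nonempty := by
    have : 1 < Fintype.card (Fin n) := by rw [Fintype.card_fin]; omega
    obtain ⟨j, hj⟩ := Fintype.exists_ne_of_one_lt_card this i
    exact ⟨j, Finset.mem_erase.mpr ⟨hj, Finset.mem_univ j⟩⟩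
  have hch : ∀ a ∈ s, ∀ b ∈ s, p i + p a ≤ p i + p b ∨ p i + p b ≤ p i + p a := by
    intro a _ b _
    exact hroot (p i) (p i + p a) (p i + p b) (hp i) (hne _ _ (hp i) (hp a))
      (hne _ _ (hp i) (hp b)) le_sup_left le_sup_left
  obtain ⟨j₀, hj₀, hmax⟩ := chain_finset_max s hsne (fun k => p i + p k) hch
  have hj₀i : j₀ ≠ i := (Finset.mem_erase.mp hj₀).1
  refine ⟨j₀, hj₀i, le_antisymm ?_ ?_⟩
  · rw [Ideal.sum_eq_sup]
    refine Finset.sup_le fun k _ => ?_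
    by_cases hk : k = i
    · subst hk; exact le_sup_left
    · exact le_trans (le_sup_right : p k ≤ p i + p k)
        (hmax k (Finset.mem_erase.mpr ⟨hk, Finset.mem_univ k⟩))
  · refine sup_le ?_ ?_
    · exact Finset.single_le_sum (fun k _ => bot_le) (Finset.mem_univ i)
    · exact Finset.single_le_sum (fun k _ => bot_le) (Finset.mem_univ j₀)
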